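/- If 2r/σ² < 1 and L > 0, then g(1) = (2r/σ² + L(1 − 2r/σ²))(p₁ − p₂) > 0 and g(L) = p₁ L^{p₂} − p₂ L^{p₁} > 0. -/
import Mathlib


/-- If `2r/σ² < 1` and `L > 0`, then
`g(1) = (2r/σ² + L(1 − 2r/σ²))(p₁ − p₂) > 0` and `g(L) = p₁ L^(p₂) − p₂ L^(p₁) > 0`. -/
theorem stmt_7 (r σ lam α p₁ p₂ L : ℝ) (g : ℝ → ℝ)
    (hr : 0 < r) (hσ : 0 < σ) (hlam : 0 < lam)
    (hα : α = 2*r/σ^2 - 1)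
    (hp₁ : p₁ = ((r + σ^2/2) + Real.sqrt ((r + σ^2/2)^2 + 2*lam*σ^2)) / σ^2)
    (hp₂ : p₂ = ((r + σ^2/2) - Real.sqrt ((r + σ^2/2)^2 + 2*lam*σ^2)) / σ^2)
    (hdrift : 2*r/σ^2 < 1) (hL : 0 < L)
    (hg : ∀ y : ℝ, g y = (α+1) * (p₁ * y^p₂ - p₂ * y^p₁)
      - α * L * (p₁ * y^(p₂-1) - p₂ * y^(p₁-1))
      - p₁ * p₂ * (y - L) * (y^(p₂-1) - y^(p₁-1))) :
    (g 1 = (2*r/σ^2 + L * (1 - 2*r/σ^2)) * (p₁ - p₂) ∧ 0 < g 1) ∧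
    (g L = p₁ * L^p₂ - p₂ * L^p₁ ∧ 0 < g L) := by
  have hσ2 : (0:ℝ) < σ^2 := by positivity
  set A := r + σ^2/2 with hA
  have hApos : 0 < A := by positivity
  have hs : A < Real.sqrt (A^2 + 2*lam*σ^2) := by
    rw [show A ^ 2 + 2*lam*σ^2 = A^2 + 2*lam*σ^2 from rfl]
    refine (Real.lt_sqrt hApos.le).mpr ?_
    nlinarith
  have hp₁pos : 0 < p₁ := by
    rw [hp₁]; apply div_pos _ hσ2; linarith
  have hp₂neg : p₂ < 0 := by
    rw [hp₂]; apply div_neg_of_neg_of_pos _ hσ2; linarith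
  have hdiff : 0 < p₁ - p₂ := by linarith
  have hα1 : α + 1 = 2*r/σ^2 := by rw [hα]; ring
  have hg1 : g 1 = (2*r/σ^2 + L * (1 - 2*r/σ^2)) * (p₁ - p₂) := by
    rw [hg 1]
    simp only [Real.one_rpow]
    rw [hα]
    ring
  have hgL : g L = p₁ * L^p₂ - p₂ * L^p₁ := by
    rw [hg L]
    rw [show p₂ - 1 = p₂ + (-1) by ring, show p₁ - 1 = p₁ + (-1) by ring,
      Real.rpow_add hL, Real.rpow_add hL, Real.rpow_neg_one]
    rw [hα]
    field_simp
    ring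
  refine ⟨⟨hg1, ?_⟩, hgL, ?_⟩
  · rw [hg1]
    have h1 : 0 < 2*r/σ^2 := by positivity
    have h2 : 0 < L * (1 - 2*r/σ^2) := by
      apply mul_pos hL; linarith
    apply mul_pos (by linarith) hdiff
  · rw [hgL]
    have h1 : 0 < p₁ * L^p₂ := mul_pos hp₁pos (Real.rpow_pos_of_pos hL _)
    have h2 : p₂ * L^p₁ < 0 :=
      mul_neg_of_neg_of_pos hp₂neg (Real.rpow_pos_of_pos hL _)
    linarith
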